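/- arXiv:1701.06381 — 2 statements merged into one kernel-verified Lean document; each statement's English description precedes it below -/
import Mathlib

section
/- For α < 0 and 0 < Δ ≤ 1/k, the supremum of ∑_{i=1}^k p_i^α over probability vectors with p_i ≥ Δ for all i equals (1-(k-1)Δ)^α + (k-1)Δ^α, and this is at most k·Δ^α. -/
open Real Finset

lemma convexOn_rpow_neg (α : ℝ) (hα : α < 0) :
    ConvexOn ℝ (Set.Ioi 0) fun x : ℝ => x ^ α := by
  refine ⟨convex_Ioi 0, fun x hx y hy a b ha hb hab => ?_⟩
  have hx0 : (0:ℝ) < x := hx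
  have hy0 : (0:ℝ) < y := hy
  have hxy : (0:ℝ) < a • x + b • y := (convex_Ioi 0) hx hy ha hb hab
  have hlog : a • Real.log x + b • Real.log y ≤ Real.log (a • x + b • y) :=
    strictConcaveOn_log_Ioi.concaveOn.2 hx hy ha hb hab
  have h1 : (a • x + b • y) ^ α = Real.exp (α * Real.log (a • x + b • y)) := by
    rw [Real.rpow_def_of_pos hxy]; ring_nf
  have h2 : α * Real.log (a • x + b • y) ≤ a • (α * Real.log x) + b • (α * Real.log y) := by
    have := mul_le_mul_of_nonpos_left hlog hα.le
    simp only [smul_eq_mul] at *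
    nlinarith
  have h3 : Real.exp (a • (α * Real.log x) + b • (α * Real.log y)) ≤
      a • Real.exp (α * Real.log x) + b • Real.exp (α * Real.log y) :=
    convexOn_exp.2 (Set.mem_univ _) (Set.mem_univ _) ha hb hab
  calc (a • x + b • y) ^ α = Real.exp (α * Real.log (a • x + b • y)) := h1
    _ ≤ Real.exp (a • (α * Real.log x) + b • (α * Real.log y)) := Real.exp_le_exp.2 h2
    _ ≤ a • Real.exp (α * Real.log x) + b • Real.exp (α * Real.log y) := h3
    _ = a • x ^ α + b • y ^ α := by
        rw [Real.rpow_def_of_pos hx0, Real.rpow_def_of_pos hy0]; ring_nf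

/-- Chord inequality for a convex function on `Ioi 0`. -/
lemma chord_le (f : ℝ → ℝ) (hf : ConvexOn ℝ (Set.Ioi 0) f) (a b x : ℝ)
    (ha : 0 < a) (hax : a ≤ x) (hxb : x ≤ b) (hab : a < b) :
    (b - a) * f x ≤ (b - x) * f a + (x - a) * f b := by
  have hba : 0 < b - a := sub_pos.2 hab
  have ht : 0 ≤ (b - x) / (b - a) := div_nonneg (by linarith) hba.le
  have hs : 0 ≤ (x - a) / (b - a) := div_nonneg (by linarith) hba.le
  have hts : (b - x) / (b - a) + (x - a) / (b - a) = 1 := by field_simp; ring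
  have hcomb : ((b - x) / (b - a)) • a + ((x - a) / (b - a)) • b = x := by
    rw [smul_eq_mul, smul_eq_mul, div_mul_eq_mul_div, div_mul_eq_mul_div, ← add_div,
      div_eq_iff hba.ne']
    ring
  have := hf.2 (Set.mem_Ioi.2 ha) (Set.mem_Ioi.2 (lt_of_lt_of_le ha (hax.trans hxb)))
    ht hs hts
  rw [hcomb] at this
  simp only [smul_eq_mul] at this
  have h2 := mul_le_mul_of_nonneg_left this hba.le
  calc (b - a) * f x ≤ (b - a) * ((b - x) / (b - a) * f a + (x - a) / (b - a) * f b) := h2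
    _ = (b - x) * f a + (x - a) * f b := by field_simp

/-- For `α < 0` and `0 < Δ ≤ 1/k`, the supremum of `∑ i, (p i) ^ α` over probability
vectors with all entries at least `Δ` equals `(1-(k-1)Δ)^α + (k-1)Δ^α ≤ k Δ^α`. -/
theorem sup_sum_rpow_prob_vector_truncated (k : ℕ) (hk : 0 < k) (α : ℝ) (hα : α < 0)
    (Δ : ℝ) (hΔ : 0 < Δ) (hΔk : Δ ≤ 1 / k) :
    IsGreatest {x : ℝ | ∃ p : Fin k → ℝ, (∀ i, Δ ≤ p i) ∧ (∑ i, p i) = 1 ∧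
        x = ∑ i, (p i) ^ α}
      ((1 - ((k : ℝ) - 1) * Δ) ^ α + ((k : ℝ) - 1) * Δ ^ α) ∧
    (1 - ((k : ℝ) - 1) * Δ) ^ α + ((k : ℝ) - 1) * Δ ^ α ≤ (k : ℝ) * Δ ^ α := by
  have hk1 : (1:ℝ) ≤ (k:ℝ) := by exact_mod_cast hk
  have hkΔ : (k:ℝ) * Δ ≤ 1 := by
    rw [le_div_iff₀ (by positivity : (0:ℝ) < (k:ℝ))] at hΔk
    nlinarith
  obtain ⟨b, hb_def⟩ : ∃ b : ℝ, b = 1 - ((k:ℝ) - 1) * Δ := ⟨_, rfl⟩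
  rw [← hb_def]
  have hΔb : Δ ≤ b := by simp only [hb_def]; nlinarith
  have hb0 : 0 < b := lt_of_lt_of_le hΔ hΔb
  let i0 : Fin k := ⟨0, hk⟩
  have hcard : ((univ.erase i0).card : ℝ) = (k:ℝ) - 1 := by
    rw [Finset.card_erase_of_mem (mem_univ _), Finset.card_univ, Fintype.card_fin]
    have : (1:ℕ) ≤ k := hk
    push_cast [Nat.cast_sub this]
    ring
  -- membership
  have hmem : (b ^ α + ((k : ℝ) - 1) * Δ ^ α) ∈
      {x : ℝ | ∃ p : Fin k → ℝ, (∀ i, Δ ≤ p i) ∧ (∑ i, p i) = 1 ∧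
        x = ∑ i, (p i) ^ α} := by
    refine ⟨fun i => if i = i0 then b else Δ, fun i => ?_, ?_, ?_⟩
    · by_cases h : i = i0 <;> simp [h, hΔb]
    · rw [← Finset.add_sum_erase _ _ (mem_univ i0)]
      have hc : ∀ i ∈ univ.erase i0, ((if i = i0 then b else Δ) : ℝ) = Δ := by
        intro i hi
        simp [Finset.ne_of_mem_erase hi]
      rw [Finset.sum_congr rfl hc, Finset.sum_const, if_pos rfl, nsmul_eq_mul, hcard]
      simp only [hb_def]; ring
    · symm
      rw [← Finset.add_sum_erase _ _ (mem_univ i0)]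
      have hc : ∀ i ∈ univ.erase i0,
          ((if i = i0 then b else Δ) : ℝ) ^ α = Δ ^ α := by
        intro i hi
        simp [Finset.ne_of_mem_erase hi]
      rw [Finset.sum_congr rfl hc, Finset.sum_const, nsmul_eq_mul, hcard]
      simp
  constructor
  · constructor
    · exact hmem
    · rintro x ⟨p, hp, hsum, rfl⟩
      have hpi_pos : ∀ i, 0 < p i := fun i => lt_of_lt_of_le hΔ (hp i)
      have hpi_le : ∀ i, p i ≤ b := by
        intro i
        have h1 : ∑ j ∈ univ.erase i, p j ≥ ((k:ℝ) - 1) * Δ := by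
          have : ∑ j ∈ univ.erase i, Δ ≤ ∑ j ∈ univ.erase i, p j :=
            Finset.sum_le_sum fun j _ => hp j
          rw [Finset.sum_const, nsmul_eq_mul] at this
          have hcard' : ((univ.erase i).card : ℝ) = (k:ℝ) - 1 := by
            rw [Finset.card_erase_of_mem (mem_univ _), Finset.card_univ, Fintype.card_fin]
            push_cast [Nat.cast_sub (hk : 1 ≤ k)]
            ring
          rw [hcard'] at this
          linarith
        have h2 : p i + ∑ j ∈ univ.erase i, p j = 1 := by
          rw [Finset.add_sum_erase _ _ (mem_univ i), hsum]
        simp only [hb_def]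
        linarith
      rcases eq_or_lt_of_le hkΔ with heq | hlt
      · -- kΔ = 1 : all p i = Δ
        have hbΔ : b = Δ := by simp only [hb_def]; nlinarith
        have hall : ∀ i, p i = Δ := by
          intro i
          have := hpi_le i
          rw [hbΔ] at this
          linarith [hp i]
        have : ∑ i, (p i) ^ α = (k:ℝ) * Δ ^ α := by
          rw [Finset.sum_congr rfl fun i _ => by rw [hall i]]
          rw [Finset.sum_const, nsmul_eq_mul, Finset.card_univ, Fintype.card_fin]
        rw [this, hbΔ]
        ring_nf
        rfl
      · -- kΔ < 1 : chord argument
        have hab : Δ < b := by simp only [hb_def]; nlinarith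
        have hba : (0:ℝ) < b - Δ := sub_pos.2 hab
        have hchord : ∀ i, (b - Δ) * (p i) ^ α ≤
            (b - p i) * Δ ^ α + (p i - Δ) * b ^ α :=
          fun i => chord_le _ (convexOn_rpow_neg α hα) Δ b (p i) hΔ (hp i) (hpi_le i) hab
        have hsum2 : (b - Δ) * ∑ i, (p i) ^ α ≤
            ((k:ℝ) * b - 1) * Δ ^ α + (1 - (k:ℝ) * Δ) * b ^ α := by
          calc (b - Δ) * ∑ i, (p i) ^ α = ∑ i, (b - Δ) * (p i) ^ α := by
                rw [Finset.mul_sum]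
            _ ≤ ∑ i, ((b - p i) * Δ ^ α + (p i - Δ) * b ^ α) :=
                Finset.sum_le_sum fun i _ => hchord i
            _ = ((k:ℝ) * b - 1) * Δ ^ α + (1 - (k:ℝ) * Δ) * b ^ α := by
                have e1 : ∑ _i : Fin k, b = (k:ℝ) * b := by
                  rw [Finset.sum_const, Finset.card_univ, Fintype.card_fin, nsmul_eq_mul]
                have e2 : ∑ _i : Fin k, Δ = (k:ℝ) * Δ := by
                  rw [Finset.sum_const, Finset.card_univ, Fintype.card_fin, nsmul_eq_mul]
                rw [Finset.sum_add_distrib, ← Finset.sum_mul, ← Finset.sum_mul,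
                  Finset.sum_sub_distrib, Finset.sum_sub_distrib, hsum, e1, e2]
        have hkey : ((k:ℝ) * b - 1) * Δ ^ α + (1 - (k:ℝ) * Δ) * b ^ α =
            (b - Δ) * (b ^ α + ((k:ℝ) - 1) * Δ ^ α) := by
          simp only [hb_def]; ring
        rw [hkey] at hsum2
        exact le_of_mul_le_mul_left (by linarith [hsum2]) hba
  · have : b ^ α ≤ Δ ^ α := Real.rpow_le_rpow_of_nonpos hΔ hΔb hα.le
    nlinarith [Real.rpow_pos_of_pos hΔ α]
end

section
/- Let φ:(0,1] → ℝ satisfy |φ'(p)| ≤ W p^{α−1} + c₁ on (0,1] with W > 0, c₁ ∈ ℝ, α ∈ (0,1/2]. Define φ_Δ(x) = φ(Δ x²) on (0,1] for Δ ∈ (0,1]. Then for all x, y ∈ [0,1] (with φ_Δ extended continuously to 0), |φ_Δ(x) − φ_Δ(y)| ≤ (Δ^α (W + |c₁|)/α)·|y − x|^{2α}, i.e., the modulus of continuity satisfies ω(φ_Δ, δ) ≤ (Δ^α (W + |c₁|)/α)·δ^{2α}. -/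
open Real Set
open scoped NNReal

lemma rpow_sub_le_sub_rpow {x y p : ℝ} (hy : 0 ≤ y) (hyx : y ≤ x)
    (hp0 : 0 ≤ p) (hp1 : p ≤ 1) : x ^ p - y ^ p ≤ (x - y) ^ p := by
  have hx : 0 ≤ x := hy.trans hyx
  have hxy : 0 ≤ x - y := sub_nonneg.2 hyx
  have h := NNReal.rpow_add_le_add_rpow (⟨x - y, hxy⟩ : ℝ≥0) (⟨y, hy⟩ : ℝ≥0) hp0 hp1
  have h' : x ^ p ≤ (x - y) ^ p + y ^ p := by
    have := (NNReal.coe_le_coe).2 h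
    push_cast [NNReal.coe_rpow] at this
    calc x ^ p = (x - y + y) ^ p := by rw [sub_add_cancel]
      _ ≤ (x - y) ^ p + y ^ p := this
  linarith

/-- If `|φ'(p)| ≤ W p^(α-1) + c₁` on `(0,1]` with `α ∈ (0,1/2]`, then
`φ_Δ(x) = φ(Δ x²)` satisfies `|φ_Δ(x) - φ_Δ(y)| ≤ (Δ^α (W + |c₁|)/α) |y - x|^(2α)`
on `[0,1]`, i.e. its modulus of continuity is bounded by `(Δ^α (W + |c₁|)/α) δ^(2α)`. -/
theorem modulus_of_continuity_sq_scaled (φ : ℝ → ℝ) (W c₁ α : ℝ) (hW : 0 < W)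
    (hα0 : 0 < α) (hα : α ≤ 1 / 2)
    (hdiff : ∀ p ∈ Ioc (0 : ℝ) 1, DifferentiableAt ℝ φ p)
    (hderiv_cont : ContinuousOn (deriv φ) (Ioc (0 : ℝ) 1))
    (hcont : ContinuousOn φ (Icc (0 : ℝ) 1))
    (hbound : ∀ p ∈ Ioc (0 : ℝ) 1, |deriv φ p| ≤ W * p ^ (α - 1) + c₁)
    (Δ : ℝ) (hΔ : Δ ∈ Ioc (0 : ℝ) 1) :
    ∀ x ∈ Icc (0 : ℝ) 1, ∀ y ∈ Icc (0 : ℝ) 1,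
      |φ (Δ * x ^ 2) - φ (Δ * y ^ 2)| ≤
        Δ ^ α * (W + |c₁|) / α * |y - x| ^ (2 * α) := by
  obtain ⟨hΔ0, hΔ1⟩ := hΔ
  set C : ℝ := Δ ^ α * (W + |c₁|) / α with hC
  have hWc : 0 < W + |c₁| := by positivity
  have hC0 : 0 ≤ C := by positivity
  -- the map u t = Δ t²
  set u : ℝ → ℝ := fun t => Δ * t ^ 2 with hu
  have humaps : MapsTo u (Icc (0:ℝ) 1) (Icc (0:ℝ) 1) := by
    intro t ht
    constructor
    · show (0:ℝ) ≤ Δ * t ^ 2; positivity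
    · show Δ * t ^ 2 ≤ 1
      nlinarith [ht.1, ht.2, sq_nonneg t, sq_nonneg (1 - t), mul_nonneg ht.1 ht.1]
  have hucont : ContinuousOn u (Icc (0:ℝ) 1) := (continuous_const.mul (continuous_pow 2)).continuousOn
  set g : ℝ → ℝ := fun t => φ (Δ * t ^ 2) with hg
  have hgcont : ContinuousOn g (Icc (0:ℝ) 1) := hcont.comp hucont humaps
  -- derivative of g on Ioo 0 1
  have hgderiv : ∀ t ∈ Ioo (0:ℝ) 1, HasDerivAt g (deriv φ (Δ * t ^ 2) * (Δ * (2 * t))) t := by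
    intro t ht
    have ht0 : 0 < t := ht.1
    have ht1 : t < 1 := ht.2
    have hmem : Δ * t ^ 2 ∈ Ioc (0:ℝ) 1 := by
      constructor
      · positivity
      · nlinarith [sq_nonneg t, sq_nonneg (1 - t)]
    have h1 : HasDerivAt (fun t : ℝ => Δ * t ^ 2) (Δ * (2 * t)) t := by
      simpa using (hasDerivAt_pow 2 t).const_mul Δ
    exact ((hdiff _ hmem).hasDerivAt).comp t h1
  -- bound on the derivative of g
  have hgbound : ∀ t ∈ Ioo (0:ℝ) 1,
      |deriv φ (Δ * t ^ 2) * (Δ * (2 * t))| ≤ C * (2 * α * t ^ (2 * α - 1)) := by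
    intro t ht
    have ht0 : 0 < t := ht.1
    have ht1 : t ≤ 1 := ht.2.le
    have hmem : Δ * t ^ 2 ∈ Ioc (0:ℝ) 1 := by
      constructor
      · positivity
      · nlinarith [sq_nonneg t, sq_nonneg (1 - t)]
    have hb := hbound _ hmem
    have habs : |deriv φ (Δ * t ^ 2)| ≤ W * (Δ * t ^ 2) ^ (α - 1) + |c₁| :=
      hb.trans (by linarith [le_abs_self c₁])
    have hpos2 : 0 ≤ Δ * (2 * t) := by positivity
    have key : (W * (Δ * t ^ 2) ^ (α - 1) + |c₁|) * (Δ * (2 * t)) ≤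
        C * (2 * α * t ^ (2 * α - 1)) := by
      have hrw : (Δ * t ^ 2) ^ (α - 1) = Δ ^ (α - 1) * t ^ (2 * α - 2) := by
        rw [Real.mul_rpow hΔ0.le (by positivity)]
        congr 1
        rw [← Real.rpow_natCast t 2, ← Real.rpow_mul ht0.le]
        norm_num
        ring_nf
      have hCsimp : C * (2 * α * t ^ (2 * α - 1)) =
          2 * Δ ^ α * (W + |c₁|) * t ^ (2 * α - 1) := by
        rw [hC]; field_simp
      rw [hrw, hCsimp]
      have e1 : W * (Δ ^ (α - 1) * t ^ (2 * α - 2)) * (Δ * (2 * t)) =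
          2 * W * Δ ^ α * t ^ (2 * α - 1) := by
        rw [show Δ ^ α = Δ ^ (α - 1) * Δ by
              rw [← Real.rpow_add_one hΔ0.ne' (α - 1)]; ring_nf,
            show t ^ (2 * α - 1) = t ^ (2 * α - 2) * t by
              rw [← Real.rpow_add_one ht0.ne' (2 * α - 2)]; ring_nf]
        ring
      have e2 : |c₁| * (Δ * (2 * t)) ≤ 2 * |c₁| * Δ ^ α * t ^ (2 * α - 1) := by
        have h1 : Δ ≤ Δ ^ α := by
          calc Δ = Δ ^ (1:ℝ) := (Real.rpow_one Δ).symm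
          _ ≤ Δ ^ α := Real.rpow_le_rpow_of_exponent_ge hΔ0 hΔ1 (by linarith)
        have h2 : t ≤ t ^ (2 * α - 1) := by
          calc t = t ^ (1:ℝ) := (Real.rpow_one t).symm
          _ ≤ t ^ (2 * α - 1) := Real.rpow_le_rpow_of_exponent_ge ht0 ht1 (by linarith)
        have h3 : Δ * t ≤ Δ ^ α * t ^ (2 * α - 1) := by
          apply mul_le_mul h1 h2 ht0.le (by positivity)
        nlinarith [abs_nonneg c₁]
      nlinarith [Real.rpow_nonneg ht0.le (2 * α - 1), Real.rpow_nonneg hΔ0.le α,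
        Real.rpow_nonneg hΔ0.le (α - 1), sq_nonneg t, mul_pos hΔ0 ht0]
    calc |deriv φ (Δ * t ^ 2) * (Δ * (2 * t))| =
        |deriv φ (Δ * t ^ 2)| * (Δ * (2 * t)) := by
          rw [abs_mul, abs_of_nonneg hpos2]
      _ ≤ (W * (Δ * t ^ 2) ^ (α - 1) + |c₁|) * (Δ * (2 * t)) :=
          mul_le_mul_of_nonneg_right habs hpos2
      _ ≤ C * (2 * α * t ^ (2 * α - 1)) := key
  -- the comparison function h t = C t^(2α)
  have hhd : ∀ t ∈ Ioo (0:ℝ) 1,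
      HasDerivAt (fun t : ℝ => C * t ^ (2 * α)) (C * (2 * α * t ^ (2 * α - 1))) t := by
    intro t ht
    exact (Real.hasDerivAt_rpow_const (Or.inl ht.1.ne')).const_mul C
  have hhcont : ContinuousOn (fun t : ℝ => C * t ^ (2 * α)) (Icc (0:ℝ) 1) :=
    (continuous_const.mul (Real.continuous_rpow_const (by positivity))).continuousOn
  -- monotonicity of C t^(2α) ± g t
  have hmono : ∀ s : ℝ, s = 1 ∨ s = -1 →
      MonotoneOn (fun t : ℝ => C * t ^ (2 * α) + s * g t) (Icc (0:ℝ) 1) := by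
    intro s hs
    apply monotoneOn_of_deriv_nonneg (convex_Icc 0 1)
    · exact hhcont.add (continuousOn_const.mul hgcont)
    · rw [interior_Icc]
      intro t ht
      exact ((hhd t ht).add ((hgderiv t ht).const_mul s)).differentiableAt.differentiableWithinAt
    · rw [interior_Icc]
      intro t ht
      have hd := (hhd t ht).add ((hgderiv t ht).const_mul s)
      rw [show deriv (fun t => C * t ^ (2 * α) + s * g t) t = _ from hd.deriv]
      have hb := hgbound t ht
      rcases hs with rfl | rfl
      · have := neg_abs_le (deriv φ (Δ * t ^ 2) * (Δ * (2 * t)))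
        simp only [one_mul]
        linarith
      · have := le_abs_self (deriv φ (Δ * t ^ 2) * (Δ * (2 * t)))
        simp only [neg_one_mul]
        linarith
  have hmono₁ := hmono 1 (Or.inl rfl)
  have hmono₂ := hmono (-1) (Or.inr rfl)
  -- main estimate for ordered pairs
  have main : ∀ x ∈ Icc (0:ℝ) 1, ∀ y ∈ Icc (0:ℝ) 1, y ≤ x →
      |g x - g y| ≤ C * (x - y) ^ (2 * α) := by
    intro x hx y hy hyx
    have h1 := hmono₁ hy hx hyx
    have h2 := hmono₂ hy hx hyx
    simp only [one_mul, neg_one_mul] at h1 h2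
    have hsub : C * x ^ (2 * α) - C * y ^ (2 * α) ≤ C * (x - y) ^ (2 * α) := by
      rw [← mul_sub]
      exact mul_le_mul_of_nonneg_left
        (rpow_sub_le_sub_rpow hy.1 hyx (by linarith) (by linarith)) hC0
    rw [abs_sub_le_iff]
    constructor <;> linarith
  -- conclude
  intro x hx y hy
  rcases le_total y x with h | h
  · rw [abs_sub_comm y x, abs_of_nonneg (sub_nonneg.2 h)]
    exact main x hx y hy h
  · rw [abs_sub_comm (g x) (g y), abs_of_nonneg (sub_nonneg.2 h)]
    exact main y hy x hx h
end
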